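/- For every u ∈ ℝ, ∫_0^u exp(−(s² − u²)/2) ds = ∑_{n=0}^∞ (2^n · n!/(2n+1)!) · u^{2n+1}. -/

import Mathlib

open MeasureTheory intervalIntegral Set
open scoped Interval

/-- Wallis-type integral: `∫_0^u (u²-s²)^n ds = 4^n (n!)² / (2n+1)! · u^(2n+1)`. -/
lemma aux_wallis (u : ℝ) (n : ℕ) :
    ∫ s in (0:ℝ)..u, (u ^ 2 - s ^ 2) ^ n
      = (4 ^ n * (n.factorial : ℝ) ^ 2 / ((2 * n + 1).factorial : ℝ)) * u ^ (2 * n + 1) := by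
  induction n with
  | zero => simp
  | succ n ih =>
    have hderiv : ∀ x ∈ Set.uIcc (0:ℝ) u,
        HasDerivAt (fun x : ℝ => x * (u ^ 2 - x ^ 2) ^ (n + 1))
          ((2 * (n:ℝ) + 3) * (u ^ 2 - x ^ 2) ^ (n + 1)
            - ((2 * (n:ℝ) + 2) * u ^ 2) * (u ^ 2 - x ^ 2) ^ n) x := by
      intro x _
      have h1 : HasDerivAt (fun x : ℝ => u ^ 2 - x ^ 2) (-(2 * x)) x := by
        simpa using (hasDerivAt_pow 2 x).const_sub (u ^ 2)
      have h3 : HasDerivAt (fun x : ℝ => x * (u ^ 2 - x ^ 2) ^ (n + 1))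
          (1 * (u ^ 2 - x ^ 2) ^ (n + 1) + x * (((n + 1 : ℕ) : ℝ) * (u ^ 2 - x ^ 2) ^ n * -(2 * x))) x :=
        (hasDerivAt_id x).mul (h1.pow (n + 1))
      convert h3 using 1
      push_cast
      ring
    have hc1 : IntervalIntegrable (fun x : ℝ =>
        (2 * (n:ℝ) + 3) * (u ^ 2 - x ^ 2) ^ (n + 1)) volume 0 u := by
      apply Continuous.intervalIntegrable; fun_prop
    have hc2 : IntervalIntegrable (fun x : ℝ =>
        ((2 * (n:ℝ) + 2) * u ^ 2) * (u ^ 2 - x ^ 2) ^ n) volume 0 u := by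
      apply Continuous.intervalIntegrable; fun_prop
    have key := intervalIntegral.integral_eq_sub_of_hasDerivAt hderiv (hc1.sub hc2)
    rw [intervalIntegral.integral_sub hc1 hc2, intervalIntegral.integral_const_mul,
      intervalIntegral.integral_const_mul, ih] at key
    norm_num at key
    -- key : (2n+3) * I_{n+1} - (2n+2)u² * (c_n u^{2n+1}) = 0
    have h23 : (2 * (n:ℝ) + 3) ≠ 0 := by positivity
    have hI : ∫ s in (0:ℝ)..u, (u ^ 2 - s ^ 2) ^ (n + 1)
        = ((2 * (n:ℝ) + 2) * u ^ 2 *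
            (4 ^ n * (n.factorial : ℝ) ^ 2 / ((2 * n + 1).factorial : ℝ) * u ^ (2 * n + 1)))
          / (2 * (n:ℝ) + 3) := by
      rw [eq_div_iff h23]
      linear_combination key
    rw [hI]
    have hfac : ((2 * (n + 1) + 1).factorial : ℝ)
        = (2 * (n:ℝ) + 3) * ((2 * (n:ℝ) + 2) * ((2 * n + 1).factorial : ℝ)) := by
      have h : 2 * (n + 1) + 1 = (2 * n + 1) + 1 + 1 := by ring
      rw [h, Nat.factorial_succ, Nat.factorial_succ]
      push_cast
      ring
    have hfn : ((2 * n + 1).factorial : ℝ) ≠ 0 := Nat.cast_ne_zero.2 (Nat.factorial_ne_zero _)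
    rw [hfac]
    push_cast [Nat.factorial_succ]
    have h22 : (2 * (n:ℝ) + 2) ≠ 0 := by positivity
    field_simp
    ring

theorem stmt_6 (u : ℝ) :
    ∫ s in (0:ℝ)..u, Real.exp (-(s ^ 2 - u ^ 2) / 2)
      = ∑' n : ℕ, (2 ^ n * (n.factorial : ℝ) / ((2 * n + 1).factorial : ℝ)) * u ^ (2 * n + 1) := by
  have hpt : ∀ s : ℝ, Real.exp (-(s ^ 2 - u ^ 2) / 2)
      = ∑' n : ℕ, (u ^ 2 - s ^ 2) ^ n / ((2:ℝ) ^ n * n.factorial) := by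
    intro s
    rw [Real.exp_eq_exp_ℝ, NormedSpace.exp_eq_tsum_div]
    refine tsum_congr fun n => ?_
    have h : -(s ^ 2 - u ^ 2) = u ^ 2 - s ^ 2 := by ring
    rw [h, div_pow, div_div]
  simp_rw [hpt]
  set f : ℕ → ℝ → ℝ := fun n s => (u ^ 2 - s ^ 2) ^ n / ((2:ℝ) ^ n * n.factorial) with hf
  have hmeas : ∀ n : ℕ, AEStronglyMeasurable (f n) (volume.restrict (Ι (0:ℝ) u)) := by
    intro n
    apply Continuous.aestronglyMeasurable
    fun_prop
  have hvol : volume (Ι (0:ℝ) u) = ENNReal.ofReal |u| := by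
    rw [Set.uIoc, Real.volume_Ioc, max_sub_min_eq_abs]
    simp
  have hbnd : ∀ n : ℕ, ∫⁻ s in Ι (0:ℝ) u, ‖f n s‖₊
      ≤ ENNReal.ofReal ((u ^ 2 / 2) ^ n / n.factorial) * ENNReal.ofReal |u| := by
    intro n
    calc ∫⁻ s in Ι (0:ℝ) u, ‖f n s‖₊
        ≤ ∫⁻ _ in Ι (0:ℝ) u, ENNReal.ofReal ((u ^ 2 / 2) ^ n / n.factorial) := by
          refine setLIntegral_mono measurable_const fun s hs => ?_
          rw [← ENNReal.ofReal_coe_nnreal, coe_nnnorm]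
          apply ENNReal.ofReal_le_ofReal
          have hs2 : s ^ 2 ≤ u ^ 2 := by
            obtain ⟨h1, h2⟩ := hs
            rcases le_total 0 u with h | h
            · rw [min_eq_left h] at h1; rw [max_eq_right h] at h2; nlinarith
            · rw [min_eq_right h] at h1; rw [max_eq_left h] at h2; nlinarith
          have habs : |u ^ 2 - s ^ 2| ≤ u ^ 2 := by
            rw [abs_le]; constructor <;> nlinarith [sq_nonneg s]
          have hpos : (0:ℝ) < (2:ℝ) ^ n * n.factorial := by positivity
          have hpos' : |(2:ℝ) ^ n * (n.factorial:ℝ)| = (2:ℝ) ^ n * n.factorial :=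
            abs_of_pos hpos
          calc ‖(u ^ 2 - s ^ 2) ^ n / ((2:ℝ) ^ n * n.factorial)‖
              = |u ^ 2 - s ^ 2| ^ n / ((2:ℝ) ^ n * n.factorial) := by
                rw [Real.norm_eq_abs, abs_div, abs_pow, hpos']
            _ ≤ (u ^ 2) ^ n / ((2:ℝ) ^ n * n.factorial) := by
                gcongr <;> first | positivity | exact habs
            _ = (u ^ 2 / 2) ^ n / n.factorial := by
                rw [div_pow]; ring
      _ = ENNReal.ofReal ((u ^ 2 / 2) ^ n / n.factorial) * ENNReal.ofReal |u| := by
          rw [setLIntegral_const, hvol]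
  have hsum : ∑' n : ℕ, ∫⁻ s in Ι (0:ℝ) u, ‖f n s‖₊ ≠ ⊤ := by
    refine ne_top_of_le_ne_top ?_ (ENNReal.tsum_le_tsum hbnd)
    rw [ENNReal.tsum_mul_right, ← ENNReal.ofReal_tsum_of_nonneg
      (fun n => by positivity) (Real.summable_pow_div_factorial _)]
    exact ENNReal.mul_ne_top ENNReal.ofReal_ne_top ENNReal.ofReal_ne_top
  have key := MeasureTheory.integral_tsum (μ := volume.restrict (Ι (0:ℝ) u)) hmeas hsum
  rw [intervalIntegral_eq_integral_uIoc, key, smul_eq_mul, ← tsum_mul_left]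
  refine tsum_congr fun n => ?_
  rw [← smul_eq_mul, ← intervalIntegral_eq_integral_uIoc]
  have : ∫ s in (0:ℝ)..u, f n s
      = (∫ s in (0:ℝ)..u, (u ^ 2 - s ^ 2) ^ n) / ((2:ℝ) ^ n * n.factorial) := by
    rw [hf]
    exact intervalIntegral.integral_div _ _
  rw [this, aux_wallis]
  have h2n : ((2:ℝ) ^ n) ≠ 0 := by positivity
  have hfn : ((n.factorial : ℝ)) ≠ 0 := Nat.cast_ne_zero.2 (Nat.factorial_ne_zero _)
  have hfn2 : ((2 * n + 1).factorial : ℝ) ≠ 0 := Nat.cast_ne_zero.2 (Nat.factorial_ne_zero _)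
  have h4 : (4:ℝ) ^ n = 2 ^ n * 2 ^ n := by
    rw [← mul_pow]; norm_num
  rw [h4]
  field_simp
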